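/- Let V₁ ≤ V₂ be two C¹ functions on ℝ², each positively homogeneous of degree 2 and positive away from the origin, and let γ : [0,T] × ℝ² → [0,1]. If z is a never-zero solution of Jz' = (1 − γ(t,z))∇V₁(z) + γ(t,z)∇V₂(z), written in polar coordinates z(t) = ρ(t)e^{iϑ(t)}, then for almost every t, 0 < 2V₁(cos ϑ(t), sin ϑ(t)) ≤ −ϑ'(t) ≤ 2V₂(cos ϑ(t), sin ϑ(t)). -/

import Mathlib

open MeasureTheory

/-- The standard symplectic matrix `J = [[0,-1],[1,0]]` acting on `ℝ²`. -/
def J2 (w : ℝ × ℝ) : ℝ × ℝ := (-w.2, w.1)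

/-- The gradient of a function `V : ℝ² → ℝ`. -/
noncomputable def grad2 (V : ℝ × ℝ → ℝ) (z : ℝ × ℝ) : ℝ × ℝ :=
  (fderiv ℝ V z (1, 0), fderiv ℝ V z (0, 1))

lemma euler_aux (V : ℝ × ℝ → ℝ) (hV : ContDiff ℝ 1 V)
    (hhom : ∀ l : ℝ, 0 < l → ∀ w : ℝ × ℝ, w ≠ 0 → V (l • w) = l ^ 2 * V w)
    (w : ℝ × ℝ) (hw : w ≠ 0) : fderiv ℝ V w w = 2 * V w := by
  have hd : HasFDerivAt V (fderiv ℝ V w) w := (hV.differentiable one_ne_zero w).hasFDerivAt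
  have hsm : HasDerivAt (fun l : ℝ => l • w) w 1 := by
    simpa using (hasDerivAt_id (1:ℝ)).smul_const w
  have h1 : HasDerivAt (fun l : ℝ => V (l • w)) (fderiv ℝ V w w) 1 := by
    have hd' : HasFDerivAt V (fderiv ℝ V w) ((1:ℝ) • w) := by simpa using hd
    simpa [Function.comp_def] using hd'.comp_hasDerivAt (x := (1:ℝ)) hsm
  have h2 : HasDerivAt (fun l : ℝ => V (l • w)) (2 * V w) 1 := by
    have hpoly : HasDerivAt (fun l : ℝ => l ^ 2 * V w) (2 * V w) 1 := by
      simpa using (hasDerivAt_pow 2 (1:ℝ)).mul_const (V w)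
    refine hpoly.congr_of_eventuallyEq ?_
    filter_upwards [eventually_gt_nhds (by norm_num : (0:ℝ) < 1)] with l hl
    exact hhom l hl w hw
  exact h1.unique h2

lemma grad_dot (V : ℝ × ℝ → ℝ) (u : ℝ × ℝ) :
    (grad2 V u).1 * u.1 + (grad2 V u).2 * u.2 = fderiv ℝ V u u := by
  have h : fderiv ℝ V u u
      = fderiv ℝ V u (u.1 • ((1:ℝ), (0:ℝ))) + fderiv ℝ V u (u.2 • ((0:ℝ), (1:ℝ))) := by
    rw [← (fderiv ℝ V u).map_add]
    congr 1
    simp [Prod.ext_iff]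
  rw [h, (fderiv ℝ V u).map_smul, (fderiv ℝ V u).map_smul]
  simp [grad2, smul_eq_mul, mul_comm]

/-- For a never-zero solution of `Jz' = (1-γ)∇V₁(z) + γ∇V₂(z)` in polar coordinates,
the angular velocity satisfies `0 < 2V₁(cos ϑ, sin ϑ) ≤ -ϑ' ≤ 2V₂(cos ϑ, sin ϑ)` a.e. -/
theorem angular_velocity_between (T : ℝ) (hT : 0 < T)
    (V₁ V₂ : ℝ × ℝ → ℝ)
    (hV₁ : ContDiff ℝ 1 V₁) (hV₂ : ContDiff ℝ 1 V₂)
    (hhom₁ : ∀ l : ℝ, 0 < l → ∀ w : ℝ × ℝ, w ≠ 0 → V₁ (l • w) = l ^ 2 * V₁ w)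
    (hhom₂ : ∀ l : ℝ, 0 < l → ∀ w : ℝ × ℝ, w ≠ 0 → V₂ (l • w) = l ^ 2 * V₂ w)
    (hpos₁ : ∀ w : ℝ × ℝ, w ≠ 0 → 0 < V₁ w)
    (hpos₂ : ∀ w : ℝ × ℝ, w ≠ 0 → 0 < V₂ w)
    (hle : ∀ w : ℝ × ℝ, V₁ w ≤ V₂ w)
    (γ : ℝ → ℝ × ℝ → ℝ)
    (hγ : ∀ t z, γ t z ∈ Set.Icc (0:ℝ) 1)
    (z z' : ℝ → ℝ × ℝ) (ρ ϑ ϑ' : ℝ → ℝ)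
    (hnz : ∀ t ∈ Set.Icc 0 T, z t ≠ 0)
    (hρ : ∀ t ∈ Set.Icc 0 T, 0 < ρ t)
    (hpolar : ∀ t ∈ Set.Icc 0 T, z t = ρ t • (Real.cos (ϑ t), Real.sin (ϑ t)))
    (hz : ∀ᵐ t ∂volume, t ∈ Set.Icc 0 T →
      HasDerivAt z (z' t) t ∧ HasDerivAt ϑ (ϑ' t) t ∧
        J2 (z' t) = (1 - γ t (z t)) • grad2 V₁ (z t) + γ t (z t) • grad2 V₂ (z t)) :
    ∀ᵐ t ∂volume, t ∈ Set.Icc 0 T →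
      0 < 2 * V₁ (Real.cos (ϑ t), Real.sin (ϑ t)) ∧
      2 * V₁ (Real.cos (ϑ t), Real.sin (ϑ t)) ≤ -ϑ' t ∧
      -ϑ' t ≤ 2 * V₂ (Real.cos (ϑ t), Real.sin (ϑ t)) := by
  have hends : ∀ᵐ t ∂volume, t ∉ ({0, T} : Set ℝ) := by
    refine (ae_iff.mpr ?_)
    simp only [not_not]
    exact measure_mono_null (fun x hx => hx) (((Set.finite_singleton T).insert 0).measure_zero _)
  filter_upwards [hz, hends] with t hder hne htIcc
  obtain ⟨hzd, hϑd, hode⟩ := hder htIcc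
  -- t is interior
  have htOo : t ∈ Set.Ioo 0 T := by
    rcases htIcc with ⟨h0, h1⟩
    constructor
    · rcases lt_or_eq_of_le h0 with h | h
      · exact h
      · exact absurd (by simp [← h]) hne
    · rcases lt_or_eq_of_le h1 with h | h
      · exact h
      · exact absurd (by simp [h]) hne
  have hmem : Set.Icc 0 T ∈ nhds t := Icc_mem_nhds htOo.1 htOo.2
  set c := Real.cos (ϑ t) with hc
  set s := Real.sin (ϑ t) with hs
  have hcs : s ^ 2 + c ^ 2 = 1 := Real.sin_sq_add_cos_sq (ϑ t)
  have hu : ((c, s) : ℝ × ℝ) ≠ 0 := by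
    intro h
    rw [Prod.ext_iff] at h
    simp only [Prod.fst_zero, Prod.snd_zero] at h
    rw [h.1, h.2] at hcs; norm_num at hcs
  -- the radius function r
  set r : ℝ → ℝ := fun u => Real.sqrt ((z u).1 ^ 2 + (z u).2 ^ 2) with hrdef
  have hreq : ∀ u ∈ Set.Icc 0 T, r u = ρ u := by
    intro u hu
    have := hpolar u hu
    have hρu := hρ u hu
    rw [hrdef]
    simp only [this, Prod.smul_fst, Prod.smul_snd, smul_eq_mul]
    rw [show (ρ u * Real.cos (ϑ u)) ^ 2 + (ρ u * Real.sin (ϑ u)) ^ 2 = ρ u ^ 2 by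
      have := Real.sin_sq_add_cos_sq (ϑ u); nlinarith]
    exact Real.sqrt_sq hρu.le
  have hz1 : HasDerivAt (fun u => (z u).1) (z' t).1 t := hzd.fst
  have hz2 : HasDerivAt (fun u => (z u).2) (z' t).2 t := hzd.snd
  have hsq : HasDerivAt (fun u => (z u).1 ^ 2 + (z u).2 ^ 2)
      (2 * (z t).1 * (z' t).1 + 2 * (z t).2 * (z' t).2) t := by
    have h1 : HasDerivAt (fun u => (z u).1 ^ 2) (2 * (z t).1 * (z' t).1) t := by
      simpa [mul_comm, mul_assoc, mul_left_comm] using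
        (hz1.fun_pow 2)
    have h2 : HasDerivAt (fun u => (z u).2 ^ 2) (2 * (z t).2 * (z' t).2) t := by
      simpa [mul_comm, mul_assoc, mul_left_comm] using (hz2.fun_pow 2)
    exact h1.add h2
  have hposq : (z t).1 ^ 2 + (z t).2 ^ 2 ≠ 0 := by
    intro h
    apply hnz t htIcc
    have h1 : (z t).1 = 0 := by nlinarith [sq_nonneg (z t).1, sq_nonneg (z t).2]
    have h2 : (z t).2 = 0 := by nlinarith [sq_nonneg (z t).1, sq_nonneg (z t).2]
    exact Prod.ext h1 h2
  obtain ⟨r', hrd⟩ : ∃ r', HasDerivAt r r' t := by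
    exact ⟨_, (Real.hasDerivAt_sqrt hposq).comp t hsq⟩
  have hrt : r t = ρ t := hreq t htIcc
  have hrpos : 0 < r t := hrt ▸ hρ t htIcc
  -- the comparison function f
  set f : ℝ → ℝ × ℝ := fun u => (r u * Real.cos (ϑ u), r u * Real.sin (ϑ u)) with hfdef
  have hfz : f =ᶠ[nhds t] z := by
    filter_upwards [hmem] with u huI
    rw [hfdef]
    simp [hpolar u huI, hreq u huI, Prod.smul_mk, smul_eq_mul]
  -- f has a computable derivative
  have hcosd : HasDerivAt (fun u => Real.cos (ϑ u)) (-s * ϑ' t) t := by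
    simpa [Function.comp_def, hs] using (Real.hasDerivAt_cos (ϑ t)).comp t hϑd
  have hsind : HasDerivAt (fun u => Real.sin (ϑ u)) (c * ϑ' t) t := by
    simpa [Function.comp_def, hc] using (Real.hasDerivAt_sin (ϑ t)).comp t hϑd
  have hf1 : HasDerivAt (fun u => r u * Real.cos (ϑ u))
      (r' * c + r t * (-s * ϑ' t)) t := hrd.mul hcosd
  have hf2 : HasDerivAt (fun u => r u * Real.sin (ϑ u))
      (r' * s + r t * (c * ϑ' t)) t := hrd.mul hsind
  have hfd : HasDerivAt f ((r' * c + r t * (-s * ϑ' t), r' * s + r t * (c * ϑ' t))) t :=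
    hf1.prodMk hf2
  have hfd' : HasDerivAt f (z' t) t := hzd.congr_of_eventuallyEq hfz
  have hveq : z' t = (r' * c + r t * (-s * ϑ' t), r' * s + r t * (c * ϑ' t)) :=
    hfd'.unique hfd
  -- pairing with z t
  have hzt : z t = (r t * c, r t * s) := by
    rw [hpolar t htIcc, ← hrt]; simp [Prod.ext_iff]; exact ⟨Or.inl rfl, Or.inl rfl⟩
  have hpair : -(z' t).2 * (z t).1 + (z' t).1 * (z t).2 = -(r t ^ 2 * ϑ' t) := by
    rw [hveq, hzt]; linear_combination (-(r t ^ 2 * ϑ' t)) * hcs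
  -- pairing from ODE
  have hode1 : (J2 (z' t)).1 * (z t).1 + (J2 (z' t)).2 * (z t).2 =
      (1 - γ t (z t)) * (2 * V₁ (z t)) + γ t (z t) * (2 * V₂ (z t)) := by
    rw [hode]
    simp only [Prod.fst_add, Prod.snd_add, Prod.smul_fst, Prod.smul_snd, smul_eq_mul]
    have e1 : (grad2 V₁ (z t)).1 * (z t).1 + (grad2 V₁ (z t)).2 * (z t).2 = 2 * V₁ (z t) := by
      rw [grad_dot, euler_aux V₁ hV₁ hhom₁ (z t) (hnz t htIcc)]
    have e2 : (grad2 V₂ (z t)).1 * (z t).1 + (grad2 V₂ (z t)).2 * (z t).2 = 2 * V₂ (z t) := by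
      rw [grad_dot, euler_aux V₂ hV₂ hhom₂ (z t) (hnz t htIcc)]
    linear_combination (1 - γ t (z t)) * e1 + γ t (z t) * e2
  have hJ : (J2 (z' t)).1 * (z t).1 + (J2 (z' t)).2 * (z t).2
      = -(z' t).2 * (z t).1 + (z' t).1 * (z t).2 := by
    simp [J2]
  -- homogeneity: Vᵢ(z t) = r t ^ 2 * Vᵢ (c, s)
  have hVz1 : V₁ (z t) = r t ^ 2 * V₁ (c, s) := by
    rw [hpolar t htIcc, ← hrt]; exact hhom₁ (r t) hrpos (c, s) hu
  have hVz2 : V₂ (z t) = r t ^ 2 * V₂ (c, s) := by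
    rw [hpolar t htIcc, ← hrt]; exact hhom₂ (r t) hrpos (c, s) hu
  have hg := hγ t (z t)
  have hVle := hle (c, s)
  have hV1pos := hpos₁ (c, s) hu
  have hV2pos := hpos₂ (c, s) hu
  -- main identity
  have hkey : -(r t ^ 2 * ϑ' t) =
      (1 - γ t (z t)) * (2 * (r t ^ 2 * V₁ (c, s))) + γ t (z t) * (2 * (r t ^ 2 * V₂ (c, s))) := by
    rw [← hpair, ← hJ, hode1, hVz1, hVz2]
  have hr2 : 0 < r t ^ 2 := by positivity
  have hmain : -ϑ' t =
      (1 - γ t (z t)) * (2 * V₁ (c, s)) + γ t (z t) * (2 * V₂ (c, s)) := by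
    have := hkey
    field_simp at this ⊢
    nlinarith [this, hr2]
  refine ⟨by linarith, ?_, ?_⟩
  · rw [hmain]; rcases hg with ⟨hg0, hg1⟩; nlinarith
  · rw [hmain]; rcases hg with ⟨hg0, hg1⟩; nlinarith
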